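/- arXiv:1205.0739 — 8 statements merged into one kernel-verified Lean document; each statement's English description precedes it below -/
import Mathlib

section
/- Let N be an even positive integer and let (a,b,m,n) be integers with m ≥ 2, n ≥ 1, 1 ≤ a ≤ m, 0 ≤ b ≤ n, a + b ≤ N/2, (m−a) + (n−b) ≤ N/2 and m + n < N − 1 (so that both (a,b,m,n) and (a−1, b+1, m−1, n+1) parametrize 3×2 tables with positive margins and N/2 cases and N/2 controls). Let f(a,b,m,n) = (2a−m)²/m + (2b−n)²/n + (2a−m+2b−n)²/(N−m−n) denote the χ²-statistic of the corresponding table. Then |f(a,b,m,n) − f(a−1, b+1, m−1, n+1)| ≤ 4N/(N+2). -/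
set_option maxHeartbeats 1000000

lemma aux_bound (t r K : ℝ) (ht : 0 ≤ t) (hr : 0 < r) (htr : t * (t + 1) ≤ r)
    (htK : t ≤ K) : 4 * t ^ 2 / r ≤ 4 * K / (K + 1) := by
  have hK : 0 ≤ K := le_trans ht htK
  rw [div_le_div_iff₀ hr (by linarith)]
  nlinarith [mul_nonneg ht ht, mul_nonneg hK ht]

/-- For integer parameters `(a,b,m,n)` of a 3×2 table with
positive margins, `N/2` cases and `N/2` controls (with `N` even and positive),
the change of the χ²-statistic
`f(a,b,m,n) = (2a−m)²/m + (2b−n)²/n + (2a−m+2b−n)²/(N−m−n)`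
under the one-individual move `(a,b,m,n) ↦ (a−1, b+1, m−1, n+1)` is bounded by
`4N/(N+2)`. -/
theorem chiSq_sensitivity_bound (N a b m n : ℤ) (hN : 0 < N) (hNeven : Even N)
    (hm : 2 ≤ m) (hn : 1 ≤ n) (ha1 : 1 ≤ a) (ham : a ≤ m) (hb0 : 0 ≤ b)
    (hbn : b ≤ n) (hab : a + b ≤ N / 2) (hcompl : (m - a) + (n - b) ≤ N / 2)
    (hmn : m + n < N - 1) :
    |((2 * (a : ℝ) - m) ^ 2 / m + (2 * (b : ℝ) - n) ^ 2 / n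
        + (2 * (a : ℝ) - m + 2 * b - n) ^ 2 / ((N : ℝ) - m - n))
      - ((2 * ((a : ℝ) - 1) - ((m : ℝ) - 1)) ^ 2 / ((m : ℝ) - 1)
        + (2 * ((b : ℝ) + 1) - ((n : ℝ) + 1)) ^ 2 / ((n : ℝ) + 1)
        + (2 * ((a : ℝ) - 1) - ((m : ℝ) - 1) + 2 * ((b : ℝ) + 1)
            - ((n : ℝ) + 1)) ^ 2 / ((N : ℝ) - (m - 1) - (n + 1)))|
      ≤ 4 * (N : ℝ) / ((N : ℝ) + 2) := by
  obtain ⟨K, hK⟩ := hNeven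
  have hK2 : N = 2 * K := by omega
  have hKdiv : N / 2 = K := by omega
  -- integer facts
  have hqK : n - b ≤ K := by omega
  have hpK : m - a ≤ K := by omega
  have hK1 : 1 ≤ K := by omega
  -- real versions
  have hmR : (1:ℝ) < (m:ℝ) := by exact_mod_cast by omega
  have hnR : (0:ℝ) < (n:ℝ) := by exact_mod_cast by omega
  have hTR : (0:ℝ) < (N:ℝ) - m - n := by
    have : (m:ℝ) + n < (N:ℝ) - 1 := by exact_mod_cast by omega
    linarith
  set p : ℝ := (m:ℝ) - a with hp
  set q : ℝ := (n:ℝ) - b with hq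
  have hp0 : 0 ≤ p := by rw [hp]; exact_mod_cast by omega
  have hq0 : 0 ≤ q := by rw [hq]; exact_mod_cast by omega
  have hpm : p ≤ (m:ℝ) - 1 := by rw [hp]; exact_mod_cast by omega
  have hqn : q ≤ (n:ℝ) := by
    rw [hq]; have : (0:ℝ) ≤ (b:ℝ) := by exact_mod_cast hb0
    linarith
  have hpKR : p ≤ (K:ℝ) := by rw [hp]; exact_mod_cast hpK
  have hqKR : q ≤ (K:ℝ) := by rw [hq]; exact_mod_cast hqK
  have hKR : (1:ℝ) ≤ (K:ℝ) := by exact_mod_cast hK1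
  have hm0 : (m:ℝ) ≠ 0 := by linarith
  have hm1 : (m:ℝ) - 1 ≠ 0 := by linarith
  have hn0 : (n:ℝ) ≠ 0 := by linarith
  have hn1 : (n:ℝ) + 1 ≠ 0 := by linarith
  have hT0 : (N:ℝ) - m - n ≠ 0 := by linarith
  have hT0' : (N:ℝ) - (m - 1) - (n + 1) ≠ 0 := by
    intro h; apply hT0; linarith
  -- rewrite the difference
  have key : ((2 * (a : ℝ) - m) ^ 2 / m + (2 * (b : ℝ) - n) ^ 2 / n
        + (2 * (a : ℝ) - m + 2 * b - n) ^ 2 / ((N : ℝ) - m - n))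
      - ((2 * ((a : ℝ) - 1) - ((m : ℝ) - 1)) ^ 2 / ((m : ℝ) - 1)
        + (2 * ((b : ℝ) + 1) - ((n : ℝ) + 1)) ^ 2 / ((n : ℝ) + 1)
        + (2 * ((a : ℝ) - 1) - ((m : ℝ) - 1) + 2 * ((b : ℝ) + 1)
            - ((n : ℝ) + 1)) ^ 2 / ((N : ℝ) - (m - 1) - (n + 1)))
      = 4 * q ^ 2 / ((n:ℝ) * (n + 1)) - 4 * p ^ 2 / ((m:ℝ) * (m - 1)) := by
    rw [hp, hq]
    field_simp
    ring
  rw [key]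
  have hbound : 4 * (N:ℝ) / ((N:ℝ) + 2) = 4 * (K:ℝ) / ((K:ℝ) + 1) := by
    have hNK : (N:ℝ) = 2 * (K:ℝ) := by exact_mod_cast hK2
    rw [hNK]
    rw [div_eq_div_iff (by linarith) (by linarith)]
    ring
  rw [hbound]
  have hQpos : (0:ℝ) < (n:ℝ) * (n + 1) := by nlinarith
  have hPpos : (0:ℝ) < (m:ℝ) * (m - 1) := by nlinarith
  have hQ : 4 * q ^ 2 / ((n:ℝ) * (n + 1)) ≤ 4 * (K:ℝ) / ((K:ℝ) + 1) :=
    aux_bound q _ _ hq0 hQpos (by nlinarith) hqKR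
  have hP : 4 * p ^ 2 / ((m:ℝ) * (m - 1)) ≤ 4 * (K:ℝ) / ((K:ℝ) + 1) :=
    aux_bound p _ _ hp0 hPpos (by nlinarith) hpKR
  have hQ0 : 0 ≤ 4 * q ^ 2 / ((n:ℝ) * (n + 1)) := by positivity
  have hP0 : 0 ≤ 4 * p ^ 2 / ((m:ℝ) * (m - 1)) := by positivity
  rw [abs_le]
  constructor <;> linarith
end

section
/- Let N be an even integer with N ≥ 6. Let T₁ be the 3×2 table with rows (1, N/2), (N/2−2, 0), (1, 0) and let T₂ be the 3×2 table with rows (0, N/2), (N/2−1, 0), (1, 0); both tables have positive row and column sums and both column sums equal N/2. Then χ²(T₂) − χ²(T₁) = 4N/(N+2). In particular the bound 4N/(N+2) for the change of the χ²-statistic under a one-individual change is attained. -/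
open Finset

/-- The Pearson χ²-statistic of a 3×2 contingency table
`O : Fin 3 → Fin 2 → ℝ`. -/
noncomputable def chiSq (O : Fin 3 → Fin 2 → ℝ) : ℝ :=
  ∑ i : Fin 3, ∑ j : Fin 2,
    (O i j - (∑ k : Fin 2, O i k) * (∑ k : Fin 3, O k j) /
        (∑ i' : Fin 3, ∑ j' : Fin 2, O i' j')) ^ 2 /
      ((∑ k : Fin 2, O i k) * (∑ k : Fin 3, O k j) /
        (∑ i' : Fin 3, ∑ j' : Fin 2, O i' j'))

lemma chiSq_T2 (N : ℕ) (hN : 6 ≤ N) :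
    chiSq ![![0, (N : ℝ) / 2], ![(N : ℝ) / 2 - 1, 0], ![1, 0]] = N := by
  have hN6 : (6 : ℝ) ≤ (N : ℝ) := by exact_mod_cast hN
  have h1 : (N : ℝ) ≠ 0 := by linarith
  have h3 : (N : ℝ) - 2 ≠ 0 := by intro h; nlinarith
  simp only [chiSq, Fin.sum_univ_succ, Fin.sum_univ_zero, Matrix.cons_val_zero,
    Matrix.cons_val_one, Matrix.head_cons, Matrix.cons_val_succ]
  simp only [add_zero, zero_add]
  rw [show (N:ℝ)/2 + ((N:ℝ)/2 - 1 + 1) = (N:ℝ) by ring, show (N:ℝ)/2 - 1 + 1 = (N:ℝ)/2 by ring]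
  field_simp
  ring

lemma chiSq_T1 (N : ℕ) (hN : 6 ≤ N) :
    chiSq ![![1, (N : ℝ) / 2], ![(N : ℝ) / 2 - 2, 0], ![1, 0]]
      = ((N : ℝ)^2 - 2*N)/((N:ℝ)+2) := by
  have hN6 : (6 : ℝ) ≤ (N : ℝ) := by exact_mod_cast hN
  simp only [chiSq, Fin.sum_univ_succ, Fin.sum_univ_zero, Matrix.cons_val_zero,
    Matrix.cons_val_one, Matrix.head_cons, Matrix.cons_val_succ]
  norm_num
  rw [show (1:ℝ) + (N:ℝ)/2 + ((N:ℝ)/2 - 2 + 1) = (N:ℝ) by ring,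
      show (1:ℝ) + ((N:ℝ)/2 - 2 + 1) = (N:ℝ)/2 by ring]
  have h1 : (N : ℝ) ≠ 0 := by linarith
  have h2 : (N : ℝ) + 2 ≠ 0 := by linarith
  have h3 : (N : ℝ) - 4 ≠ 0 := by intro h; nlinarith
  have h5 : (2:ℝ) + (N:ℝ) ≠ 0 := by linarith
  have hA : (N:ℝ)/2 - 2 ≠ 0 := by intro h; nlinarith
  have hB : 1 + (N:ℝ)/2 ≠ 0 := by positivity
  have hC : (N:ℝ)/2 ≠ 0 := by positivity
  have hD : (N:ℝ) - 2*2 ≠ 0 := by intro h; nlinarith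
  field_simp
  ring

/-- For `N` even, `N ≥ 6`, the tables `T₁` with rows
`(1, N/2), (N/2−2, 0), (1, 0)` and `T₂` with rows `(0, N/2), (N/2−1, 0), (1, 0)`
satisfy `χ²(T₂) − χ²(T₁) = 4N/(N+2)`; i.e. the sensitivity bound `4N/(N+2)` is
attained by a one-individual change. -/
theorem chiSq_sensitivity_attained (N : ℕ) (hNeven : Even N) (hN : 6 ≤ N) :
    chiSq ![![0, (N : ℝ) / 2], ![(N : ℝ) / 2 - 1, 0], ![1, 0]]
      - chiSq ![![1, (N : ℝ) / 2], ![(N : ℝ) / 2 - 2, 0], ![1, 0]]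
      = 4 * (N : ℝ) / ((N : ℝ) + 2) := by
  rw [chiSq_T2 N hN, chiSq_T1 N hN]
  have hN6 : (6 : ℝ) ≤ (N : ℝ) := by exact_mod_cast hN
  have h2 : (N : ℝ) + 2 ≠ 0 := by linarith
  field_simp
  ring
end

section
/- For any 3×2 contingency table with nonnegative real entries, positive row sums, positive column sums, and total count N, the Pearson χ²-statistic satisfies 0 ≤ χ² ≤ N. (The maximal χ²-statistic over all such tables with N individuals is N, while the minimal one is 0.) -/
open Finset

lemma term_nonneg (x r s N : ℝ) (hr : 0 < r) (hs : 0 < s) (hN : 0 < N) :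
    0 ≤ (x - r * s / N) ^ 2 / (r * s / N) :=
  div_nonneg (sq_nonneg _) (by positivity)

lemma term_bound (x r s N : ℝ) (hx : 0 ≤ x) (hxr : x ≤ r) (hr : 0 < r)
    (hs : 0 < s) (hN : 0 < N) :
    (x - r * s / N) ^ 2 / (r * s / N) ≤ N * x / s - 2 * x + r * s / N := by
  have key : (x - r * s / N) ^ 2 / (r * s / N)
      = N * x ^ 2 / (r * s) - 2 * x + r * s / N := by
    field_simp
    ring
  rw [key]
  have h2 : N * x ^ 2 / (r * s) ≤ N * x / s := by
    rw [div_le_div_iff₀ (by positivity) hs]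
    nlinarith [mul_nonneg (mul_nonneg hN.le hx) hs.le]
  linarith

/-- For any 3×2 table with nonnegative entries, positive row and
column sums, and total count `N`, the Pearson χ²-statistic satisfies
`0 ≤ χ² ≤ N`. -/
theorem chiSq_range (O : Fin 3 → Fin 2 → ℝ) (N : ℝ)
    (hnonneg : ∀ i j, 0 ≤ O i j)
    (hrow : ∀ i : Fin 3, 0 < ∑ j : Fin 2, O i j)
    (hcol : ∀ j : Fin 2, 0 < ∑ i : Fin 3, O i j)
    (hN : N = ∑ i : Fin 3, ∑ j : Fin 2, O i j) :
    0 ≤ chiSq O ∧ chiSq O ≤ N := by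
  have h00 := hnonneg 0 0
  have h01 := hnonneg 0 1
  have h10 := hnonneg 1 0
  have h11 := hnonneg 1 1
  have h20 := hnonneg 2 0
  have h21 := hnonneg 2 1
  have hr0 := hrow 0
  have hr1 := hrow 1
  have hr2 := hrow 2
  have hc0 := hcol 0
  have hc1 := hcol 1
  simp only [Fin.sum_univ_two] at hr0 hr1 hr2
  simp only [Fin.sum_univ_three] at hc0 hc1
  simp only [Fin.sum_univ_two, Fin.sum_univ_three] at hN
  have hN0 : 0 < N := by rw [hN]; linarith
  unfold chiSq
  simp only [Fin.sum_univ_two, Fin.sum_univ_three]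
  rw [← hN]
  have t00 := term_bound (O 0 0) (O 0 0 + O 0 1) (O 0 0 + O 1 0 + O 2 0) N h00 (by linarith) hr0 hc0 hN0
  have t01 := term_bound (O 0 1) (O 0 0 + O 0 1) (O 0 1 + O 1 1 + O 2 1) N h01 (by linarith) hr0 hc1 hN0
  have t10 := term_bound (O 1 0) (O 1 0 + O 1 1) (O 0 0 + O 1 0 + O 2 0) N h10 (by linarith) hr1 hc0 hN0
  have t11 := term_bound (O 1 1) (O 1 0 + O 1 1) (O 0 1 + O 1 1 + O 2 1) N h11 (by linarith) hr1 hc1 hN0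
  have t20 := term_bound (O 2 0) (O 2 0 + O 2 1) (O 0 0 + O 1 0 + O 2 0) N h20 (by linarith) hr2 hc0 hN0
  have t21 := term_bound (O 2 1) (O 2 0 + O 2 1) (O 0 1 + O 1 1 + O 2 1) N h21 (by linarith) hr2 hc1 hN0
  have n00 := term_nonneg (O 0 0) (O 0 0 + O 0 1) (O 0 0 + O 1 0 + O 2 0) N hr0 hc0 hN0
  have n01 := term_nonneg (O 0 1) (O 0 0 + O 0 1) (O 0 1 + O 1 1 + O 2 1) N hr0 hc1 hN0
  have n10 := term_nonneg (O 1 0) (O 1 0 + O 1 1) (O 0 0 + O 1 0 + O 2 0) N hr1 hc0 hN0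
  have n11 := term_nonneg (O 1 1) (O 1 0 + O 1 1) (O 0 1 + O 1 1 + O 2 1) N hr1 hc1 hN0
  have n20 := term_nonneg (O 2 0) (O 2 0 + O 2 1) (O 0 0 + O 1 0 + O 2 0) N hr2 hc0 hN0
  have n21 := term_nonneg (O 2 1) (O 2 0 + O 2 1) (O 0 1 + O 1 1 + O 2 1) N hr2 hc1 hN0
  have hA : N * O 0 0 / (O 0 0 + O 1 0 + O 2 0) + N * O 1 0 / (O 0 0 + O 1 0 + O 2 0)
      + N * O 2 0 / (O 0 0 + O 1 0 + O 2 0) = N := by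
    field_simp
  have hB : N * O 0 1 / (O 0 1 + O 1 1 + O 2 1) + N * O 1 1 / (O 0 1 + O 1 1 + O 2 1)
      + N * O 2 1 / (O 0 1 + O 1 1 + O 2 1) = N := by
    field_simp
  have hC : (O 0 0 + O 0 1) * (O 0 0 + O 1 0 + O 2 0) / N
      + (O 0 0 + O 0 1) * (O 0 1 + O 1 1 + O 2 1) / N
      + (O 1 0 + O 1 1) * (O 0 0 + O 1 0 + O 2 0) / N
      + (O 1 0 + O 1 1) * (O 0 1 + O 1 1 + O 2 1) / N
      + (O 2 0 + O 2 1) * (O 0 0 + O 1 0 + O 2 0) / N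
      + (O 2 0 + O 2 1) * (O 0 1 + O 1 1 + O 2 1) / N = N := by
    field_simp
    rw [hN]; ring
  constructor
  · linarith
  · linarith
end

section
/- Let ε > 0 with ε ≠ 2. Let f_T(t) = (1/2)·exp(−t/2) for t ≥ 0 and f_T(t) = 0 for t < 0 (the density of the χ²-distribution with 2 degrees of freedom), and let f_Y(y) = (ε/8)·exp(−ε|y|/4) for y ∈ ℝ (the density of the Laplace distribution with mean 0 and scale 4/ε). Then for every x ∈ ℝ the convolution ∫_ℝ f_T(t)·f_Y(x−t) dt equals: (ε/4)·(1/(ε+2))·exp(εx/4) if x < 0, and (ε/4)·[ (1/(ε−2) + 1/(ε+2))·exp(−x/2) − (1/(ε−2))·exp(−εx/4) ] if x ≥ 0. Hence this piecewise function is the probability density of T + Y when T ~ χ²₂ and Y ~ Laplace(0, 4/ε) are independent. -/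
open MeasureTheory Real Set

lemma exp_neg_mul_integral_Ioi (a : ℝ) {b : ℝ} (hb : 0 < b) :
    (∫ t in Ioi a, exp (-(b * t))) = exp (-(b * a)) / b := by
  have h := integral_comp_mul_left_Ioi (fun u => exp (-u)) a hb
  simp only [smul_eq_mul] at h
  rw [h, integral_exp_neg_Ioi, inv_mul_eq_div]

lemma exp_mul_integral_interval (c x : ℝ) (hc : c ≠ 0) :
    (∫ t in (0:ℝ)..x, exp (c * t)) = (exp (c * x) - 1) / c := by
  have h := intervalIntegral.integral_comp_mul_left (a := (0:ℝ)) (b := x) (fun u => exp u) hc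
  simp only [smul_eq_mul, mul_zero, integral_exp] at h
  rw [h, exp_zero, inv_mul_eq_div]

lemma two_exp_eq (c u v u' v' : ℝ) (h : u + v = u' + v') :
    c * exp u * exp v = c * exp u' * exp v' := by
  rw [mul_assoc, mul_assoc, ← exp_add, ← exp_add, h]

/-- The convolution of the χ²₂ density
`f_T(t) = (1/2)exp(−t/2)` (for `t ≥ 0`, else `0`) with the
`Laplace(0, 4/ε)` density `f_Y(y) = (ε/8)exp(−ε|y|/4)` equals the stated
piecewise density of the perturbed χ² test statistic `T + Y`. -/
theorem perturbed_chiSq_density (ε : ℝ) (hε : 0 < ε) (hε2 : ε ≠ 2) (x : ℝ) :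
    (∫ t : ℝ, (if 0 ≤ t then (1 / 2) * exp (-t / 2) else 0)
        * ((ε / 8) * exp (-ε * |x - t| / 4)))
      = if x < 0 then (ε / 4) * (1 / (ε + 2)) * exp (ε * x / 4)
        else (ε / 4) * ((1 / (ε - 2) + 1 / (ε + 2)) * exp (-x / 2)
          - (1 / (ε - 2)) * exp (-ε * x / 4)) := by
  set f : ℝ → ℝ := fun t => (1 / 2) * exp (-t / 2) * ((ε / 8) * exp (-ε * |x - t| / 4)) with hf
  have hb : (0:ℝ) < 1 / 2 + ε / 4 := by positivity
  have htailfun : ∀ t : ℝ, x ≤ t →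
      f t = (ε / 16 * exp (ε * x / 4)) * exp (-(1/2 + ε/4) * t) := by
    intro t ht
    have hxt : x - t ≤ 0 := by linarith
    rw [hf]
    simp only [abs_of_nonpos hxt]
    calc (1 / 2) * exp (-t / 2) * ((ε / 8) * exp (-ε * -(x - t) / 4))
        = ε / 16 * exp (-t / 2) * exp (-ε * -(x - t) / 4) := by ring
      _ = ε / 16 * exp (ε * x / 4) * exp (-(1/2 + ε/4) * t) := two_exp_eq _ _ _ _ _ (by ring)
  have hstep1 : (∫ t : ℝ, (if 0 ≤ t then (1 / 2) * exp (-t / 2) else 0)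
        * ((ε / 8) * exp (-ε * |x - t| / 4))) = ∫ t in Ioi (0:ℝ), f t := by
    rw [← integral_Ici_eq_integral_Ioi, ← integral_indicator measurableSet_Ici]
    congr 1
    ext t
    by_cases ht : 0 ≤ t <;> simp [indicator, ht, hf]
  rw [hstep1]
  have htail : ∀ a : ℝ, x ≤ a → (∫ t in Ioi a, f t)
      = (ε / 16 * exp (ε * x / 4)) * (exp (-((1/2 + ε/4) * a)) / (1/2 + ε/4)) := by
    intro a ha
    rw [← exp_neg_mul_integral_Ioi a hb, ← integral_const_mul]
    refine setIntegral_congr_fun measurableSet_Ioi (fun t ht => ?_)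
    have ht' : x ≤ t := le_trans ha (le_of_lt ht)
    rw [htailfun t ht']
    ring_nf
  have hepos : (0:ℝ) < ε + 2 := by linarith
  by_cases hx : x < 0
  · rw [if_pos hx, htail 0 hx.le]
    rw [mul_zero, neg_zero, exp_zero]
    field_simp
    ring
  · rw [if_neg hx]
    push_neg at hx
    have hsplit : Ioc (0:ℝ) x ∪ Ioi x = Ioi 0 := Ioc_union_Ioi_eq_Ioi hx
    have hcont : Continuous f := by
      apply Continuous.mul
      · exact continuous_const.mul (Real.continuous_exp.comp (continuous_id.neg.div_const 2))
      · exact continuous_const.mul (Real.continuous_exp.comp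
          ((continuous_const.mul ((continuous_const.sub continuous_id).abs)).div_const 4))
    have hint1 : IntegrableOn f (Ioc 0 x) := hcont.integrableOn_Ioc
    have hint2 : IntegrableOn f (Ioi x) := by
      refine IntegrableOn.congr_fun
        (((exp_neg_integrableOn_Ioi x hb).const_mul (ε / 16 * exp (ε * x / 4))))
        (fun t ht => ?_) measurableSet_Ioi
      exact (htailfun t (le_of_lt ht)).symm
    rw [← hsplit, setIntegral_union (Ioc_disjoint_Ioi le_rfl) measurableSet_Ioi hint1 hint2]
    have hc : (ε/4 - 1/2 : ℝ) ≠ 0 := by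
      intro h; apply hε2; linarith [h]
    have hIoc : (∫ t in Ioc (0:ℝ) x, f t)
        = (ε / 16 * exp (-ε * x / 4)) * ((exp ((ε/4 - 1/2) * x) - 1) / (ε/4 - 1/2)) := by
      rw [← exp_mul_integral_interval _ x hc, ← intervalIntegral.integral_of_le hx,
        ← intervalIntegral.integral_const_mul]
      refine intervalIntegral.integral_congr (fun t ht => ?_)
      rw [uIcc_of_le hx] at ht
      have hxt : 0 ≤ x - t := by simp only [mem_Icc] at ht; linarith [ht.2]
      rw [hf]
      simp only [abs_of_nonneg hxt]
      calc (1 / 2) * exp (-t / 2) * ((ε / 8) * exp (-ε * (x - t) / 4))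
          = ε / 16 * exp (-ε * (x - t) / 4) * exp (-t / 2) := by ring
        _ = ε / 16 * exp (-ε * x / 4) * exp ((ε/4 - 1/2) * t) := two_exp_eq _ _ _ _ _ (by ring)
    rw [hIoc, htail x le_rfl]
    have he2 : (ε - 2 : ℝ) ≠ 0 := sub_ne_zero.mpr hε2
    have e1 : exp (ε * x / 4) * exp (-((1/2 + ε/4) * x)) = exp (-x / 2) := by
      rw [← exp_add]; ring_nf
    have e2 : exp (-ε * x / 4) * exp ((ε/4 - 1/2) * x) = exp (-x/2) := by
      rw [← exp_add]; ring_nf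
    have expand : ε / 16 * exp (-ε * x / 4) * ((exp ((ε/4 - 1/2) * x) - 1) / (ε/4 - 1/2))
          + ε / 16 * exp (ε * x / 4) * (exp (-((1/2 + ε/4) * x)) / (1/2 + ε/4))
        = ε / 16 * ((exp (-ε*x/4) * exp ((ε/4 - 1/2) * x) - exp (-ε*x/4)) / (ε/4 - 1/2))
          + ε / 16 * ((exp (ε * x / 4) * exp (-((1/2 + ε/4) * x))) / (1/2 + ε/4)) := by
      ring
    rw [expand, e1, e2]
    rw [show (ε/4 - 1/2 : ℝ) = (ε - 2)/4 by ring, show (1/2 + ε/4 : ℝ) = (ε + 2)/4 by ring]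
    field_simp
    ring
end

section
/- Let ε > 0 with ε ≠ 2, and let f be the function defined by f(x) = (ε/4)·(1/(ε+2))·exp(εx/4) for x < 0 and f(x) = (ε/4)·[ (1/(ε−2) + 1/(ε+2))·exp(−x/2) − (1/(ε−2))·exp(−εx/4) ] for x ≥ 0 (the density of the sum of independent χ²₂ and Laplace(0,4/ε) random variables). Then for every x ∈ ℝ, ∫_{−∞}^{x} f(u) du equals: (1/(ε+2))·exp(εx/4) if x < 0, and 1 − (ε/2)·(1/(ε−2) + 1/(ε+2))·exp(−x/2) + (1/(ε−2))·exp(−εx/4) if x ≥ 0. In particular this piecewise function is the cumulative distribution function of the perturbed χ² test statistic T + Y. -/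
open MeasureTheory Real Set

lemma exp_mul_integrableOn_Iic {c : ℝ} (hc : 0 < c) (x : ℝ) :
    IntegrableOn (fun u => exp (c * u)) (Iic x) := by
  have h : Integrable ((Iic (c * x)).indicator exp) :=
    (integrableOn_exp_Iic (c * x)).integrable_indicator measurableSet_Iic
  have h2 := (integrable_comp_mul_left_iff ((Iic (c * x)).indicator exp) hc.ne').2 h
  rw [← integrable_indicator_iff measurableSet_Iic]
  convert h2 using 1
  · rfl
  ext u
  simp only [Set.indicator, mem_Iic]
  by_cases hu : u ≤ x
  · rw [if_pos hu, if_pos (by nlinarith)]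
  · rw [if_neg hu, if_neg (by intro h3; exact hu (le_of_mul_le_mul_left h3 hc))]

lemma exp_mul_integral_Iic {c : ℝ} (hc : 0 < c) (x : ℝ) :
    ∫ u in Iic x, exp (c * u) = exp (c * x) / c := by
  have := integral_Iic_of_hasDerivAt_of_tendsto' (a := x)
    (f := fun u => exp (c * u) / c) (f' := fun u => exp (c * u)) (m := 0)
    (fun u _ => by
      have : HasDerivAt (fun u => exp (c * u)) (exp (c * u) * c) u :=
        (Real.hasDerivAt_exp (c * u)).comp u (by simpa using (hasDerivAt_id u).const_mul c)
      simpa [mul_div_assoc, mul_div_cancel_right₀ _ hc.ne'] using this.div_const c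
      )
    (exp_mul_integrableOn_Iic hc x)
    (by
      have : Filter.Tendsto (fun u : ℝ => c * u) Filter.atBot Filter.atBot :=
        Filter.tendsto_atBot_atBot.2 fun b => ⟨b / c, fun a ha => by
          calc c * a ≤ c * (b/c) := by nlinarith
          _ = b := by field_simp⟩
      simpa using ((Real.tendsto_exp_atBot.comp this).div_const c))
  simpa using this

lemma exp_mul_intervalIntegral {c : ℝ} (hc : c ≠ 0) (x : ℝ) :
    ∫ u in (0:ℝ)..x, exp (c * u) = (exp (c * x) - 1) / c := by
  have := intervalIntegral.integral_eq_sub_of_hasDerivAt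
    (f := fun u => exp (c * u) / c) (f' := fun u => exp (c * u)) (a := 0) (b := x)
    (fun u _ => by
      have : HasDerivAt (fun u => exp (c * u)) (exp (c * u) * c) u :=
        (Real.hasDerivAt_exp (c * u)).comp u (by simpa using (hasDerivAt_id u).const_mul c)
      simpa [mul_div_assoc, mul_div_cancel_right₀ _ hc] using this.div_const c)
    ((continuous_exp.comp (continuous_const.mul continuous_id)).intervalIntegrable 0 x)
  rw [this]; simp [sub_div]


/-- The cumulative distribution function
`F(x) = ∫_{−∞}^{x} f(u) du` of the density `f` of the perturbed χ² test
statistic `T + Y` (with `T ~ χ²₂` and `Y ~ Laplace(0, 4/ε)` independent)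
equals the stated piecewise expression. -/
theorem perturbed_chiSq_cdf (ε : ℝ) (hε : 0 < ε) (hε2 : ε ≠ 2) (x : ℝ) :
    (∫ u in Set.Iic x,
        (if u < 0 then (ε / 4) * (1 / (ε + 2)) * exp (ε * u / 4)
          else (ε / 4) * ((1 / (ε - 2) + 1 / (ε + 2)) * exp (-u / 2)
            - (1 / (ε - 2)) * exp (-ε * u / 4))))
      = if x < 0 then (1 / (ε + 2)) * exp (ε * x / 4)
        else 1 - (ε / 2) * (1 / (ε - 2) + 1 / (ε + 2)) * exp (-x / 2)
          + (1 / (ε - 2)) * exp (-ε * x / 4) := by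
  have hε4 : (0:ℝ) < ε / 4 := by linarith
  have hεp : ε + 2 ≠ 0 := by linarith
  have hεm : ε - 2 ≠ 0 := sub_ne_zero.2 hε2
  set A : ℝ := 1 / (ε - 2) + 1 / (ε + 2) with hA
  set B : ℝ := 1 / (ε - 2) with hB
  -- key computation for the negative part up to a point y ≤ 0 (on Iio-type congruence)
  have hneg : ∀ y : ℝ, y ≤ 0 →
      (∫ u in Set.Iic y,
        (if u < 0 then (ε / 4) * (1 / (ε + 2)) * exp (ε * u / 4)
          else (ε / 4) * (A * exp (-u / 2) - B * exp (-ε * u / 4))))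
      = (1 / (ε + 2)) * exp (ε / 4 * y) := by
    intro y hy
    have hcongr : ∀ᵐ u : ℝ, u ∈ Set.Iic y →
        (if u < 0 then (ε / 4) * (1 / (ε + 2)) * exp (ε * u / 4)
          else (ε / 4) * (A * exp (-u / 2) - B * exp (-ε * u / 4)))
        = (ε / 4) * (1 / (ε + 2)) * exp (ε / 4 * u) := by
      have h0 : ∀ᵐ u : ℝ, u ≠ 0 := by
        rw [MeasureTheory.ae_iff]; simpa using Real.volume_singleton (a := 0)
      filter_upwards [h0] with u hu huy
      have : u < 0 := lt_of_le_of_ne (le_trans huy hy) hu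
      rw [if_pos this]; ring_nf
    rw [MeasureTheory.setIntegral_congr_ae measurableSet_Iic hcongr,
      MeasureTheory.integral_const_mul, exp_mul_integral_Iic hε4]
    field_simp
  by_cases hx : x < 0
  · rw [if_pos hx]
    have := hneg x hx.le
    rw [this]
    ring_nf
  · rw [if_neg hx]
    have hx0 : (0:ℝ) ≤ x := not_lt.1 hx
    have hunion : Set.Iic (0:ℝ) ∪ Set.Ioc 0 x = Set.Iic x := Set.Iic_union_Ioc_eq_Iic hx0
    set f : ℝ → ℝ := fun u =>
      if u < 0 then (ε / 4) * (1 / (ε + 2)) * exp (ε * u / 4)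
        else (ε / 4) * (A * exp (-u / 2) - B * exp (-ε * u / 4)) with hf
    have hint1 : MeasureTheory.IntegrableOn f (Set.Iic 0) := by
      apply MeasureTheory.IntegrableOn.congr_fun_ae
        (f := fun u => (ε / 4) * (1 / (ε + 2)) * exp (ε / 4 * u))
      · exact (((exp_mul_integrableOn_Iic hε4 0)).const_mul _)
      · have h0 : ∀ᵐ u : ℝ, u ≠ 0 := by
          rw [MeasureTheory.ae_iff]; simpa using Real.volume_singleton (a := 0)
        rw [Filter.EventuallyEq, MeasureTheory.ae_restrict_iff' measurableSet_Iic]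
        filter_upwards [h0] with u hu huy
        have : u < 0 := lt_of_le_of_ne huy hu
        rw [hf]; simp only [if_pos this]; ring_nf
    have hcont : Continuous fun u : ℝ => (ε / 4) * (A * exp (-u / 2) - B * exp (-ε * u / 4)) := by
      fun_prop
    have hint2 : MeasureTheory.IntegrableOn f (Set.Ioc 0 x) := by
      apply MeasureTheory.IntegrableOn.congr_fun (hcont.integrableOn_Ioc) _ measurableSet_Ioc
      intro u hu
      rw [hf]; simp only [if_neg (not_lt.2 hu.1.le)]
    have hsplit : ∫ u in Set.Iic x, f u
        = (∫ u in Set.Iic 0, f u) + ∫ u in Set.Ioc 0 x, f u := by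
      rw [← hunion, MeasureTheory.setIntegral_union (Set.Iic_disjoint_Ioc le_rfl)
        measurableSet_Ioc hint1 hint2]
    rw [show (∫ u in Set.Iic x,
        (if u < 0 then (ε / 4) * (1 / (ε + 2)) * exp (ε * u / 4)
          else (ε / 4) * (A * exp (-u / 2) - B * exp (-ε * u / 4)))) = ∫ u in Set.Iic x, f u
      from rfl, hsplit]
    have h1 : (∫ u in Set.Iic (0:ℝ), f u) = 1 / (ε + 2) := by
      have := hneg 0 le_rfl
      simpa using this
    have h2 : (∫ u in Set.Ioc (0:ℝ) x, f u)
        = (ε / 4) * (A * ((exp (-(1/2) * x) - 1) / (-(1/2)))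
            - B * ((exp (-(ε/4) * x) - 1) / (-(ε/4)))) := by
      rw [← intervalIntegral.integral_of_le hx0]
      have hcongr : ∀ u ∈ Set.uIcc (0:ℝ) x, f u
          = (ε / 4) * A * exp (-(1/2) * u) - (ε / 4) * B * exp (-(ε/4) * u) := by
        intro u hu
        rw [Set.uIcc_of_le hx0] at hu
        rw [hf]; simp only [if_neg (not_lt.2 hu.1)]; ring_nf
      rw [intervalIntegral.integral_congr hcongr, intervalIntegral.integral_sub
        ((by fun_prop : Continuous fun u : ℝ => ε / 4 * A * exp (-(1/2) * u)).intervalIntegrable 0 x)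
        ((by fun_prop : Continuous fun u : ℝ => ε / 4 * B * exp (-(ε/4) * u)).intervalIntegrable 0 x),
        intervalIntegral.integral_const_mul, intervalIntegral.integral_const_mul,
        exp_mul_intervalIntegral (by norm_num : (-(1/2):ℝ) ≠ 0) x,
        exp_mul_intervalIntegral (by simp [hε.ne'] : (-(ε/4):ℝ) ≠ 0) x]
      ring
    rw [h1, h2]
    have e1 : exp (-(1/2) * x) = exp (-x / 2) := by ring_nf
    have e2 : exp (-(ε/4) * x) = exp (-ε * x / 4) := by ring_nf
    rw [e1, e2, hA, hB]
    field_simp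
    ring
end

section
/- Let N be an even positive integer and let a, b be integers with a ≥ 1, b ≥ 1 and a + b < N/2. Let D be the exactly independent 3×2 table with rows (a, a), (b, b), (N/2−a−b, N/2−a−b) and let D' be its neighbor with rows (a−1, a), (b+1, b), (N/2−a−b, N/2−a−b). Then the difference of the corresponding p-values satisfies | exp(−χ²(D)/2) − exp(−χ²(D')/2) | = 1 − exp( −(1/2)·(1/(2a−1) + 1/(2b+1)) ) ≤ 1 − exp(−2/3) ≤ exp(−2/3). -/
open Finset Real

lemma chiSq_indep (A B C : ℝ) (hA : 0 < A) (hB : 0 < B) (hC : 0 < C) :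
    chiSq ![![A,A],![B,B],![C,C]] = 0 := by
  have hS : A + B + C ≠ 0 := by positivity
  simp only [chiSq, Fin.sum_univ_three, Fin.sum_univ_two, Matrix.cons_val_zero,
    Matrix.cons_val_one, Matrix.head_cons, Matrix.cons_val_two, Matrix.tail_cons,
    Matrix.head_fin_const]
  field_simp
  ring

set_option maxHeartbeats 1000000 in
lemma chiSq_neighbor (A B C : ℝ) (hA : 1 ≤ A) (hB : 1 ≤ B) (hC : 0 < C) :
    chiSq ![![A-1,A],![B+1,B],![C,C]] = 1/(2*A-1) + 1/(2*B+1) := by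
  have h1 : 2*A - 1 ≠ 0 := by nlinarith
  have h2 : 2*B + 1 ≠ 0 := by nlinarith
  have hS : A + B + C ≠ 0 := by nlinarith
  have hS2 : 2*(A + B + C) ≠ 0 := by nlinarith
  have hC' : C ≠ 0 := ne_of_gt hC
  simp only [chiSq, Fin.sum_univ_three, Fin.sum_univ_two, Matrix.cons_val_zero,
    Matrix.cons_val_one, Matrix.head_cons, Matrix.cons_val_two, Matrix.tail_cons,
    Matrix.head_fin_const]
  have htot : A - 1 + A + (B + 1 + B) + (C + C) = 2*(A+B+C) := by ring
  have hcol1 : A - 1 + (B + 1) + C = A + B + C := by ring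
  have hrow1 : A - 1 + A = 2*A - 1 := by ring
  have hrow2 : B + 1 + B = 2*B + 1 := by ring
  have hE1 : (2*A-1) * (A+B+C) / (2*(A+B+C)) = (2*A-1)/2 := by
    field_simp
  have hE2 : (2*B+1) * (A+B+C) / (2*(A+B+C)) = (2*B+1)/2 := by
    field_simp
  have hE3 : (C + C) * (A+B+C) / (2*(A+B+C)) = C := by
    field_simp; ring
  rw [htot, hcol1, hrow1, hrow2, hE1, hE2, hE3]
  have e1 : (A - 1 - (2*A-1)/2)^2 / ((2*A-1)/2) = (1/4) / ((2*A-1)/2) := by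
    rw [show A - 1 - (2*A-1)/2 = -(1/2) by ring]; norm_num
  have e2 : (A - (2*A-1)/2)^2 / ((2*A-1)/2) = (1/4) / ((2*A-1)/2) := by
    rw [show A - (2*A-1)/2 = 1/2 by ring]; norm_num
  have e3 : (B + 1 - (2*B+1)/2)^2 / ((2*B+1)/2) = (1/4) / ((2*B+1)/2) := by
    rw [show B + 1 - (2*B+1)/2 = 1/2 by ring]; norm_num
  have e4 : (B - (2*B+1)/2)^2 / ((2*B+1)/2) = (1/4) / ((2*B+1)/2) := by
    rw [show B - (2*B+1)/2 = -(1/2) by ring]; norm_num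
  rw [e1, e2, e3, e4, show C - C = 0 by ring]
  field_simp
  ring

/-- For the exactly independent table `D` with rows
`(a,a), (b,b), (N/2−a−b, N/2−a−b)` and its one-individual neighbor `D'` with
rows `(a−1,a), (b+1,b), (N/2−a−b, N/2−a−b)`, the difference of the p-values
`exp(−χ²/2)` equals `1 − exp(−(1/2)(1/(2a−1)+1/(2b+1)))`, which is at most
`1 − exp(−2/3)`, which in turn is at most `exp(−2/3)`. -/
theorem pValue_sensitivity (N a b : ℤ) (hN : 0 < N) (hNeven : Even N)
    (ha : 1 ≤ a) (hb : 1 ≤ b) (hab : a + b < N / 2) :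
    |exp (-chiSq ![![(a : ℝ), (a : ℝ)], ![(b : ℝ), (b : ℝ)],
          ![(N : ℝ) / 2 - a - b, (N : ℝ) / 2 - a - b]] / 2)
        - exp (-chiSq ![![(a : ℝ) - 1, (a : ℝ)], ![(b : ℝ) + 1, (b : ℝ)],
          ![(N : ℝ) / 2 - a - b, (N : ℝ) / 2 - a - b]] / 2)|
       = 1 - exp (-(1 / 2) * (1 / (2 * (a : ℝ) - 1) + 1 / (2 * (b : ℝ) + 1)))
      ∧ 1 - exp (-(1 / 2) * (1 / (2 * (a : ℝ) - 1) + 1 / (2 * (b : ℝ) + 1)))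
        ≤ 1 - exp (-2 / 3)
      ∧ 1 - exp (-2 / 3) ≤ exp (-2 / 3) := by
  obtain ⟨r, hr⟩ := hNeven
  have hNr : (N : ℝ) = 2 * (r : ℝ) := by rw [hr]; push_cast; ring
  have hdiv : N / 2 = r := by rw [hr]; omega
  have hab' : a + b < r := by omega
  have hAr : (1 : ℝ) ≤ (a : ℝ) := by exact_mod_cast ha
  have hBr : (1 : ℝ) ≤ (b : ℝ) := by exact_mod_cast hb
  have hCr : (0 : ℝ) < (N : ℝ) / 2 - a - b := by
    rw [hNr]
    have : (a : ℝ) + b < r := by exact_mod_cast hab'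
    linarith
  have h1 : (0:ℝ) < 2 * (a : ℝ) - 1 := by linarith
  have h2 : (0:ℝ) < 2 * (b : ℝ) + 1 := by linarith
  rw [chiSq_indep _ _ _ (by linarith) (by linarith) hCr,
      chiSq_neighbor _ _ _ hAr hBr hCr]
  have hexp : -(1 / (2 * (a : ℝ) - 1) + 1 / (2 * (b : ℝ) + 1)) / 2
      = -(1 / 2) * (1 / (2 * (a : ℝ) - 1) + 1 / (2 * (b : ℝ) + 1)) := by ring
  rw [hexp]
  have hx0 : (0:ℝ) ≤ 1 / (2 * (a : ℝ) - 1) + 1 / (2 * (b : ℝ) + 1) := by positivity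
  have hle1 : exp (-(1 / 2) * (1 / (2 * (a : ℝ) - 1) + 1 / (2 * (b : ℝ) + 1))) ≤ 1 :=
    exp_le_one_iff.mpr (by nlinarith)
  constructor
  · rw [neg_zero, zero_div, exp_zero, abs_of_nonneg (by linarith)]
  constructor
  · have hx43 : 1 / (2 * (a : ℝ) - 1) + 1 / (2 * (b : ℝ) + 1) ≤ 4 / 3 := by
      have i1 : 1 / (2 * (a : ℝ) - 1) ≤ 1 := by
        rw [div_le_one h1]; linarith
      have i2 : 1 / (2 * (b : ℝ) + 1) ≤ 1 / 3 := by
        apply div_le_div_of_nonneg_left (by norm_num) (by norm_num) <;> linarith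
      linarith
    have : (-2/3 : ℝ) ≤ -(1 / 2) * (1 / (2 * (a : ℝ) - 1) + 1 / (2 * (b : ℝ) + 1)) := by
      linarith
    have := exp_le_exp.mpr this
    linarith [exp_le_exp.mpr this]
  · have hlog : (2/3 : ℝ) < Real.log 2 := by
      have := Real.log_two_gt_d9
      linarith
    have h' : Real.exp (-Real.log 2) < Real.exp (-2/3) :=
      Real.exp_lt_exp.mpr (by linarith)
    have he : Real.exp (-Real.log 2) = 1/2 := by
      rw [Real.exp_neg, Real.exp_log (by norm_num)]
      norm_num
    rw [he] at h'
    linarith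
end

section
/- Let c ≥ 3 and N be real numbers with N(c−2) − 2c > 0 and Nc − 2N − c > 0. Consider the 3×2 table with rows (0, (N+c)/c), (N/c, 0), (N(c−2)/(2c), (N(c−2)−2c)/(2c)); it has both column sums equal to N/2 and positive row sums. Then its Pearson χ²-statistic equals N(2Nc − 4N − 4c + c²) / (c(Nc − 2N − c)). -/
open Finset

set_option maxHeartbeats 2000000 in
/-- For reals `c ≥ 3` and `N` with `N(c−2) − 2c > 0` and
`Nc − 2N − c > 0`, the 3×2 table with rows `(0, (N+c)/c)`, `(N/c, 0)`,
`(N(c−2)/(2c), (N(c−2)−2c)/(2c))` has χ²-statistic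
`N(2Nc − 4N − 4c + c²) / (c(Nc − 2N − c))`. -/
theorem chiSq_after_move (c N : ℝ) (hc : 3 ≤ c)
    (h1 : 0 < N * (c - 2) - 2 * c) (h2 : 0 < N * c - 2 * N - c) :
    chiSq ![![0, (N + c) / c], ![N / c, 0],
        ![N * (c - 2) / (2 * c), (N * (c - 2) - 2 * c) / (2 * c)]]
      = N * (2 * N * c - 4 * N - 4 * c + c ^ 2) / (c * (N * c - 2 * N - c)) := by
  have hc0 : (0:ℝ) < c := by linarith
  have hN0 : (0:ℝ) < N := by nlinarith
  have hcne : c ≠ 0 := ne_of_gt hc0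
  have hNne : N ≠ 0 := ne_of_gt hN0
  have hNc : N + c ≠ 0 := by positivity
  have h2' : N * c - 2 * N - c ≠ 0 := ne_of_gt h2
  unfold chiSq
  simp only [Fin.sum_univ_three, Fin.sum_univ_two, Matrix.cons_val_zero, Matrix.cons_val_one,
    Matrix.head_cons, Matrix.cons_val_two, Matrix.tail_cons]
  have hT : 0 + (N + c) / c + (N / c + 0) +
      (N * (c - 2) / (2 * c) + (N * (c - 2) - 2 * c) / (2 * c)) = N := by
    field_simp; ring
  have hC0 : 0 + N / c + N * (c - 2) / (2 * c) = N / 2 := by field_simp; ring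
  have hC1 : (N + c) / c + 0 + (N * (c - 2) - 2 * c) / (2 * c) = N / 2 := by field_simp; ring
  have hR0 : 0 + (N + c) / c = (N + c) / c := by ring
  have hR1 : N / c + 0 = N / c := by ring
  have hR2 : N * (c - 2) / (2 * c) + (N * (c - 2) - 2 * c) / (2 * c)
      = (N * c - 2 * N - c) / c := by field_simp; ring
  rw [hT, hC0, hC1, hR0, hR1, hR2]
  have hRne : (N * c - 2 * N - c) / c ≠ 0 := div_ne_zero h2' hcne
  generalize hD : N * c - 2 * N - c = D at *
  field_simp
  linear_combination (-(2*N*(c+N)*D + (6*N*c^2 + 18*N^2*c - 4*N^2*c^2 - 4*N^3*c + 12*N^3) + 2*N*(c+N)*(N*c-2*N-c))) * hD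
end

section
/- Let ε > 0, S > 0, d a positive integer, and let p_μ(t) = ∏_{i=1}^{d} (ε/(2S))·exp(−ε|t_i − μ_i|/S) denote the density at t ∈ ℝ^d of the random vector μ + b, where b has d independent coordinates each Laplace-distributed with mean 0 and scale S/ε. Then for any μ, μ' ∈ ℝ^d with ‖μ − μ'‖₁ ≤ S and every t ∈ ℝ^d, p_μ(t) ≤ exp(ε)·p_{μ'}(t). Consequently, if a function f on datasets has sensitivity S (i.e., ‖f(D) − f(D')‖₁ ≤ S for all datasets D, D' differing in one individual), releasing f(D) + b with b ~ Laplace(0, S/ε)^d satisfies ε-differential privacy. -/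
open Finset Real

/-- The Laplace mechanism is ε-differentially private:
if `p_μ(t) = ∏ i, (ε/(2S))·exp(−ε|tᵢ − μᵢ|/S)` is the density of `μ + b`
where the coordinates of `b` are i.i.d. `Laplace(0, S/ε)`, then for any
`μ, μ'` with `‖μ − μ'‖₁ ≤ S` and every `t`, `p_μ(t) ≤ exp(ε)·p_{μ'}(t)`. -/
theorem laplace_mechanism_dp (ε S : ℝ) (hε : 0 < ε) (hS : 0 < S)
    (d : ℕ) (hd : 0 < d) (μ μ' : Fin d → ℝ)
    (hsens : ∑ i : Fin d, |μ i - μ' i| ≤ S) (t : Fin d → ℝ) :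
    ∏ i : Fin d, (ε / (2 * S)) * exp (-ε * |t i - μ i| / S)
      ≤ exp ε * ∏ i : Fin d, (ε / (2 * S)) * exp (-ε * |t i - μ' i| / S) := by
  rw [prod_mul_distrib, prod_mul_distrib, ← exp_sum, ← exp_sum, mul_comm (exp ε),
    mul_assoc, ← exp_add]
  have hc : (0:ℝ) ≤ ∏ _i : Fin d, ε / (2 * S) :=
    prod_nonneg fun _ _ => by positivity
  apply mul_le_mul_of_nonneg_left _ hc
  rw [exp_le_exp]
  have hsum : ∑ i : Fin d, (-ε * |t i - μ i| / S)
      ≤ ∑ i : Fin d, (-ε * |t i - μ' i| / S + ε * |μ i - μ' i| / S) := by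
    apply sum_le_sum
    intro i _
    have htri : |t i - μ' i| - |μ i - μ' i| ≤ |t i - μ i| := by
      have := abs_sub_abs_le_abs_sub (t i - μ' i) (μ i - μ' i)
      have h2 : t i - μ' i - (μ i - μ' i) = t i - μ i := by ring
      rwa [h2] at this
    have hεS : 0 < ε / S := div_pos hε hS
    have key := mul_le_mul_of_nonneg_left htri hεS.le
    have e1 : -ε * |t i - μ i| / S = -((ε/S) * |t i - μ i|) := by ring
    have e2 : -ε * |t i - μ' i| / S = -((ε/S) * |t i - μ' i|) := by ring
    have e3 : ε * |μ i - μ' i| / S = (ε/S) * |μ i - μ' i| := by ring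
    rw [e1, e2, e3]
    nlinarith [key]
  rw [sum_add_distrib] at hsum
  have h2 : ∑ i : Fin d, ε * |μ i - μ' i| / S ≤ ε := by
    have : ∑ i : Fin d, ε * |μ i - μ' i| / S = (ε / S) * ∑ i : Fin d, |μ i - μ' i| := by
      rw [mul_sum]; apply sum_congr rfl; intro i _; ring
    rw [this]
    calc (ε / S) * ∑ i : Fin d, |μ i - μ' i| ≤ (ε / S) * S :=
          mul_le_mul_of_nonneg_left hsens (le_of_lt (div_pos hε hS))
      _ = ε := by field_simp
  linarith
end
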